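/- arXiv:1911.13265 — 2 statements merged into one kernel-verified Lean document; each statement's English description precedes it below -/
import Mathlib

section
/- Let Φ(ξ₁,ξ₂,ξ₃) = (ξ₁+ξ₂+ξ₃)³ - ξ₁³ - ξ₂³ - ξ₃³. There exists a constant C > 0 such that for all N ≥ 1 and all real ξ₁, ξ₂, ξ₃ satisfying |ξ₁ - N - N^{-1/2}/2| < N^{-1/2}, |ξ₂ - N - N^{-1/2}/2| < N^{-1/2}, and |ξ₃ + N + N^{-1/2}/2| < N^{-1/2}, one has |Φ(ξ₁,ξ₂,ξ₃)| ≤ C. -/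
/-- boundedness of the resonance function
`Φ(ξ₁,ξ₂,ξ₃) = (ξ₁+ξ₂+ξ₃)³ - ξ₁³ - ξ₂³ - ξ₃³` on the near-resonant frequency box. -/
theorem resonance_function_bounded :
    ∃ C : ℝ, 0 < C ∧ ∀ N ξ₁ ξ₂ ξ₃ : ℝ, 1 ≤ N →
      |ξ₁ - N - N ^ (-(1 : ℝ) / 2) / 2| < N ^ (-(1 : ℝ) / 2) →
      |ξ₂ - N - N ^ (-(1 : ℝ) / 2) / 2| < N ^ (-(1 : ℝ) / 2) →
      |ξ₃ + N + N ^ (-(1 : ℝ) / 2) / 2| < N ^ (-(1 : ℝ) / 2) →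
      |(ξ₁ + ξ₂ + ξ₃) ^ 3 - ξ₁ ^ 3 - ξ₂ ^ 3 - ξ₃ ^ 3| ≤ C := by
  refine ⟨60, by norm_num, fun N ξ₁ ξ₂ ξ₃ hN h1 h2 h3 => ?_⟩
  have hN0 : (0 : ℝ) < N := lt_of_lt_of_le one_pos hN
  set m : ℝ := N ^ (-(1 : ℝ) / 2) with hm
  have hm0 : 0 < m := Real.rpow_pos_of_pos hN0 _
  have hm1 : m ≤ 1 := Real.rpow_le_one_of_one_le_of_nonpos hN (by norm_num)
  have hNm : N * (m * m) = 1 := by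
    have : m * m = N ^ (-(1 : ℝ)) := by
      rw [hm, ← Real.rpow_add hN0]; norm_num
    rw [this, Real.rpow_neg_one]
    field_simp
  rw [abs_lt] at h1 h2 h3
  have h12 : |ξ₁ + ξ₂| ≤ 5 * N := by
    rw [abs_le]; constructor <;> nlinarith [h1.1, h1.2, h2.1, h2.2]
  have h23 : |ξ₂ + ξ₃| ≤ 2 * m := by
    rw [abs_le]; constructor <;> nlinarith [h2.1, h2.2, h3.1, h3.2]
  have h31 : |ξ₃ + ξ₁| ≤ 2 * m := by
    rw [abs_le]; constructor <;> nlinarith [h1.1, h1.2, h3.1, h3.2]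
  have key : (ξ₁ + ξ₂ + ξ₃) ^ 3 - ξ₁ ^ 3 - ξ₂ ^ 3 - ξ₃ ^ 3
      = 3 * ((ξ₁ + ξ₂) * ((ξ₂ + ξ₃) * (ξ₃ + ξ₁))) := by ring
  rw [key, abs_mul, abs_mul, abs_mul]
  have : |(3 : ℝ)| * (|ξ₁ + ξ₂| * (|ξ₂ + ξ₃| * |ξ₃ + ξ₁|))
      ≤ 3 * (5 * N * (2 * m * (2 * m))) := by
    rw [abs_of_nonneg (by norm_num : (0:ℝ) ≤ 3)]
    gcongr
  calc |(3 : ℝ)| * (|ξ₁ + ξ₂| * (|ξ₂ + ξ₃| * |ξ₃ + ξ₁|))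
      ≤ 3 * (5 * N * (2 * m * (2 * m))) := this
    _ = 60 * (N * (m * m)) := by ring
    _ = 60 := by rw [hNm]; ring
end

section
/- Let f ∈ L²(ℝ³) be supported in the set { (τ,ξ,η) : |ξ| ∼ N, |η| ≤ M, |τ - ξ³ - η³| ≤ L } where N ≥ 1, M ≥ 1, L ≥ 1. Then the three-dimensional Lebesgue measure of this support set, intersected with any translate of the support of a second such function (with parameters L' in place of L), restricted to a ξ-interval where |3ξ₁² - 3(ξ-ξ₁)²| ≥ K, is at most C · M · min(L, L') · max(L, L')/K. Concretely: fix τ, ξ, η ∈ ℝ and define E = { (τ₁,ξ₁,η₁) : |τ₁ - ξ₁³ - η₁³| ≤ L, |τ-τ₁ - (ξ-ξ₁)³ - (η-η₁)³| ≤ L', |η₁| ≤ M, |3ξ₁² - 3(ξ-ξ₁)²| ≥ K }. Then |E| ≤ C M min(L,L') max(L,L')/K for an absolute constant C. -/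
open MeasureTheory

/-- time-frequency slice bound: the `τ₁`-slice has measure at most `2 min(L, L')`. -/
lemma slice_tau (a₁ a₂ b c₁ c₂ L L' : ℝ) :
    volume {t : ℝ | |t - a₁ - a₂| ≤ L ∧ |b - t - c₁ - c₂| ≤ L'} ≤
      ENNReal.ofReal (2 * min L L') := by
  rcases le_total L L' with h | h
  · refine le_trans (measure_mono (show _ ⊆ Set.Icc (a₁ + a₂ - L) (a₁ + a₂ + L) from
      fun t ht => Set.mem_Icc.mpr ⟨by have := abs_le.mp ht.1; linarith [this.1],
        by have := abs_le.mp ht.1; linarith [this.2]⟩)) ?_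
    rw [Real.volume_Icc, min_eq_left h]
    exact ENNReal.ofReal_le_ofReal (by linarith)
  · refine le_trans (measure_mono (show _ ⊆ Set.Icc (b - c₁ - c₂ - L') (b - c₁ - c₂ + L') from
      fun t ht => Set.mem_Icc.mpr ⟨by have := abs_le.mp ht.2; linarith [this.2],
        by have := abs_le.mp ht.2; linarith [this.1]⟩)) ?_
    rw [Real.volume_Icc, min_eq_right h]
    exact ENNReal.ofReal_le_ofReal (by linarith)

/-- `ξ₁`-slice bound using the lower bound `K` on the derivative of `ξ₁ ↦ ξ₁³ + (ξ-ξ₁)³`. -/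
lemma slice_xi (ξ d B K : ℝ) (hK : 0 < K) (hB : 0 ≤ B) :
    volume {x : ℝ | |x ^ 3 + (ξ - x) ^ 3 + d| ≤ B ∧ K ≤ |3 * x ^ 2 - 3 * (ξ - x) ^ 2|} ≤
      ENNReal.ofReal (4 * B / K) := by
  set S := {x : ℝ | |x ^ 3 + (ξ - x) ^ 3 + d| ≤ B ∧ K ≤ |3 * x ^ 2 - 3 * (ξ - x) ^ 2|} with hS
  -- key diameter estimate on each half
  have key : ∀ x ∈ S, ∀ y ∈ S, 0 < (2 * x - ξ) * (2 * y - ξ) → |x - y| ≤ 2 * B / K := by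
    intro x hx y hy hsgn
    have hx1 : |x ^ 3 + (ξ - x) ^ 3 + d| ≤ B := hx.1
    have hy1 : |y ^ 3 + (ξ - y) ^ 3 + d| ≤ B := hy.1
    have hx2 : K ≤ |3 * ξ * (2 * x - ξ)| := by
      have : 3 * x ^ 2 - 3 * (ξ - x) ^ 2 = 3 * ξ * (2 * x - ξ) := by ring
      rw [← this]; exact hx.2
    have hy2 : K ≤ |3 * ξ * (2 * y - ξ)| := by
      have : 3 * y ^ 2 - 3 * (ξ - y) ^ 2 = 3 * ξ * (2 * y - ξ) := by ring
      rw [← this]; exact hy.2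
    have hdiff : |(x ^ 3 + (ξ - x) ^ 3 + d) - (y ^ 3 + (ξ - y) ^ 3 + d)| ≤ 2 * B := by
      calc |(x ^ 3 + (ξ - x) ^ 3 + d) - (y ^ 3 + (ξ - y) ^ 3 + d)|
          ≤ |x ^ 3 + (ξ - x) ^ 3 + d| + |y ^ 3 + (ξ - y) ^ 3 + d| := abs_sub _ _
        _ ≤ 2 * B := by linarith
    have hfact : (x ^ 3 + (ξ - x) ^ 3 + d) - (y ^ 3 + (ξ - y) ^ 3 + d)
        = (x - y) * (3 * ξ * (x + y - ξ)) := by ring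
    -- same sign gives average bounded below
    have hmid : K ≤ |3 * ξ * (x + y - ξ)| := by
      set A1 := 3 * ξ * (2 * x - ξ) with hA1
      set A2 := 3 * ξ * (2 * y - ξ) with hA2
      have hprod : 0 ≤ A1 * A2 := by
        have : A1 * A2 = 9 * ξ ^ 2 * ((2 * x - ξ) * (2 * y - ξ)) := by rw [hA1, hA2]; ring
        rw [this]; positivity
      have habs : |A1 + A2| = |A1| + |A2| := by
        rcases le_or_gt 0 A1 with h1 | h1 <;> rcases le_or_gt 0 A2 with h2 | h2
        · rw [abs_of_nonneg h1, abs_of_nonneg h2, abs_of_nonneg (by linarith)]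
        · nlinarith [abs_nonneg (A1 + A2), abs_nonneg A1, abs_nonneg A2,
            abs_of_nonneg h1, abs_of_neg h2]
        · nlinarith [abs_nonneg (A1 + A2), abs_of_neg h1, abs_of_nonneg h2]
        · rw [abs_of_neg h1, abs_of_neg h2, abs_of_neg (by linarith)]; ring
      have : 3 * ξ * (x + y - ξ) = (A1 + A2) / 2 := by rw [hA1, hA2]; ring
      rw [this, abs_div, abs_of_nonneg (by norm_num : (0:ℝ) ≤ 2),
        le_div_iff₀ (by norm_num : (0:ℝ) < 2), habs]
      linarith
    have h1 : |x - y| * |3 * ξ * (x + y - ξ)| ≤ 2 * B := by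
      rw [← abs_mul, ← hfact]; exact hdiff
    have hKxy : K * |x - y| ≤ 2 * B := by
      have h2 := mul_le_mul_of_nonneg_left hmid (abs_nonneg (x - y))
      nlinarith [h1]
    rw [le_div_iff₀ hK]
    linarith [hKxy]
  -- split into two halves
  have hsplit : S ⊆ (S ∩ Set.Ioi (ξ / 2)) ∪ (S ∩ Set.Iio (ξ / 2)) := by
    intro x hx
    rcases lt_trichotomy x (ξ / 2) with h | h | h
    · exact Or.inr ⟨hx, h⟩
    · exfalso
      have := hx.2
      have hz : 3 * x ^ 2 - 3 * (ξ - x) ^ 2 = 0 := by rw [h]; ring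
      rw [hz, abs_zero] at this; linarith
    · exact Or.inl ⟨hx, h⟩
  have hhalf : ∀ T : Set ℝ, T ⊆ S → (∀ x ∈ T, 0 < 2 * x - ξ) ∨ (∀ x ∈ T, 2 * x - ξ < 0) →
      volume T ≤ ENNReal.ofReal (2 * B / K) := by
    intro T hTS hsgn
    refine (Real.volume_le_diam T).trans (EMetric.diam_le fun x hx y hy => ?_)
    rw [edist_dist, Real.dist_eq]
    refine ENNReal.ofReal_le_ofReal ?_
    refine key x (hTS hx) y (hTS hy) ?_
    rcases hsgn with h | h
    · exact mul_pos (h x hx) (h y hy)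
    · exact mul_pos_of_neg_of_neg (h x hx) (h y hy)
  calc volume S ≤ volume ((S ∩ Set.Ioi (ξ / 2)) ∪ (S ∩ Set.Iio (ξ / 2))) := measure_mono hsplit
    _ ≤ volume (S ∩ Set.Ioi (ξ / 2)) + volume (S ∩ Set.Iio (ξ / 2)) := measure_union_le _ _
    _ ≤ ENNReal.ofReal (2 * B / K) + ENNReal.ofReal (2 * B / K) := by
        gcongr
        · exact hhalf _ Set.inter_subset_left (Or.inl fun x hx => by
            have : ξ / 2 < x := hx.2; linarith)
        · exact hhalf _ Set.inter_subset_left (Or.inr fun x hx => by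
            have : x < ξ / 2 := hx.2; linarith)
    _ = ENNReal.ofReal (4 * B / K) := by
        rw [← ENNReal.ofReal_add (by positivity) (by positivity)]
        congr 1; ring

/-- measure bound for the intersection of modulation-localized supports for the
dispersion relation `τ = ξ³ + η³`: with `E` as below (coordinates `(τ₁, ξ₁, η₁)`),
`|E| ≤ C M min(L,L') max(L,L')/K`. -/
theorem modulation_support_measure_bound :
    ∃ C : ℝ, 0 < C ∧ ∀ N M L L' K τ ξ η : ℝ,
      1 ≤ N → 1 ≤ M → 1 ≤ L → 1 ≤ L' → 0 < K →
      volume {p : ℝ × ℝ × ℝ |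
          |p.1 - p.2.1 ^ 3 - p.2.2 ^ 3| ≤ L ∧
          |τ - p.1 - (ξ - p.2.1) ^ 3 - (η - p.2.2) ^ 3| ≤ L' ∧
          |p.2.2| ≤ M ∧
          K ≤ |3 * p.2.1 ^ 2 - 3 * (ξ - p.2.1) ^ 2|}
        ≤ ENNReal.ofReal (C * M * min L L' * max L L' / K) := by
  refine ⟨32, by norm_num, ?_⟩
  intro N M L L' K τ ξ η hN hM hL hL' hK
  set E : Set (ℝ × ℝ × ℝ) := {p : ℝ × ℝ × ℝ |
      |p.1 - p.2.1 ^ 3 - p.2.2 ^ 3| ≤ L ∧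
      |τ - p.1 - (ξ - p.2.1) ^ 3 - (η - p.2.2) ^ 3| ≤ L' ∧
      |p.2.2| ≤ M ∧
      K ≤ |3 * p.2.1 ^ 2 - 3 * (ξ - p.2.1) ^ 2|} with hEdef
  set A : Set (ℝ × ℝ) := {q : ℝ × ℝ |
      |q.1 ^ 3 + (ξ - q.1) ^ 3 + (q.2 ^ 3 + (η - q.2) ^ 3 - τ)| ≤ L + L' ∧
      |q.2| ≤ M ∧ K ≤ |3 * q.1 ^ 2 - 3 * (ξ - q.1) ^ 2|} with hAdef
  have hE : MeasurableSet E := by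
    simp only [hEdef, Set.setOf_and]
    refine MeasurableSet.inter ?_ (MeasurableSet.inter ?_ (MeasurableSet.inter ?_ ?_)) <;>
      exact measurableSet_le (by fun_prop) (by fun_prop)
  have hA : MeasurableSet A := by
    simp only [hAdef, Set.setOf_and]
    refine MeasurableSet.inter ?_ (MeasurableSet.inter ?_ ?_) <;>
      exact measurableSet_le (by fun_prop) (by fun_prop)
  have step1 : volume E ≤ ENNReal.ofReal (2 * min L L') * volume A := by
    rw [show (volume : Measure (ℝ × ℝ × ℝ)) = (volume : Measure ℝ).prod volume from
      Measure.volume_eq_prod ℝ (ℝ × ℝ), Measure.prod_apply_symm hE]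
    calc ∫⁻ q, volume ((fun t => (t, q)) ⁻¹' E) ∂volume
        ≤ ∫⁻ q, A.indicator (fun _ => ENNReal.ofReal (2 * min L L')) q ∂volume := by
          refine lintegral_mono fun q => ?_
          by_cases hq : q ∈ A
          · rw [Set.indicator_of_mem hq]
            refine (measure_mono fun t ht => ?_).trans
              (slice_tau (q.1 ^ 3) (q.2 ^ 3) τ ((ξ - q.1) ^ 3) ((η - q.2) ^ 3) L L')
            exact ⟨ht.1, ht.2.1⟩
          · rw [Set.indicator_of_notMem hq]
            have hempty : ((fun t => (t, q)) ⁻¹' E) = ∅ := by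
              rw [← Set.not_nonempty_iff_eq_empty]
              rintro ⟨t, ht⟩
              refine hq ⟨?_, ht.2.2.1, ht.2.2.2⟩
              have h1 : |t - q.1 ^ 3 - q.2 ^ 3| ≤ L := ht.1
              have h2 : |τ - t - (ξ - q.1) ^ 3 - (η - q.2) ^ 3| ≤ L' := ht.2.1
              have heq : q.1 ^ 3 + (ξ - q.1) ^ 3 + (q.2 ^ 3 + (η - q.2) ^ 3 - τ)
                  = -((t - q.1 ^ 3 - q.2 ^ 3) + (τ - t - (ξ - q.1) ^ 3 - (η - q.2) ^ 3)) := by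
                ring
              rw [heq, abs_neg]
              exact (abs_add_le _ _).trans (by linarith)
            rw [hempty, measure_empty]
      _ = ENNReal.ofReal (2 * min L L') * volume A := lintegral_indicator_const hA _
  have step2 : volume A ≤ ENNReal.ofReal (4 * (L + L') / K) * ENNReal.ofReal (2 * M) := by
    rw [show (volume : Measure (ℝ × ℝ)) = (volume : Measure ℝ).prod volume from
      Measure.volume_eq_prod ℝ ℝ, Measure.prod_apply_symm hA]
    calc ∫⁻ y, volume ((fun x => (x, y)) ⁻¹' A) ∂volume
        ≤ ∫⁻ y, (Set.Icc (-M) M).indicator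
            (fun _ => ENNReal.ofReal (4 * (L + L') / K)) y ∂volume := by
          refine lintegral_mono fun y => ?_
          by_cases hy : y ∈ Set.Icc (-M) M
          · rw [Set.indicator_of_mem hy]
            refine (measure_mono fun x hx => ?_).trans
              (slice_xi ξ (y ^ 3 + (η - y) ^ 3 - τ) (L + L') K hK (by linarith))
            exact ⟨hx.1, hx.2.2⟩
          · rw [Set.indicator_of_notMem hy]
            have hempty : ((fun x => (x, y)) ⁻¹' A) = ∅ := by
              rw [← Set.not_nonempty_iff_eq_empty]
              rintro ⟨x, hx⟩
              exact hy (Set.mem_Icc.mpr (abs_le.mp hx.2.1))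
            rw [hempty, measure_empty]
      _ = ENNReal.ofReal (4 * (L + L') / K) * volume (Set.Icc (-M) M) :=
          lintegral_indicator_const measurableSet_Icc _
      _ = ENNReal.ofReal (4 * (L + L') / K) * ENNReal.ofReal (2 * M) := by
          rw [Real.volume_Icc]; congr 1; ring
  calc volume E ≤ ENNReal.ofReal (2 * min L L') *
        (ENNReal.ofReal (4 * (L + L') / K) * ENNReal.ofReal (2 * M)) :=
        step1.trans (mul_le_mul_right step2 _)
    _ ≤ ENNReal.ofReal (32 * M * min L L' * max L L' / K) := by
        rw [← ENNReal.ofReal_mul (by positivity), ← ENNReal.ofReal_mul (by positivity)]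
        refine ENNReal.ofReal_le_ofReal ?_
        have hrw : 2 * min L L' * (4 * (L + L') / K * (2 * M))
            = 16 * min L L' * (L + L') * M / K := by
          field_simp; ring
        rw [hrw, div_le_div_iff₀ hK hK]
        have hmin : 0 ≤ min L L' := le_min (by linarith) (by linarith)
        have hsum : L + L' ≤ 2 * max L L' := by
          have := le_max_left L L'; have := le_max_right L L'; linarith
        have hM0 : 0 ≤ M := by linarith
        nlinarith [mul_le_mul_of_nonneg_left hsum
          (by positivity : (0:ℝ) ≤ 16 * min L L' * M * K)]
end
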